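/- Let α ∈ (0,2). Then ∫_{ℝ²}∫_{ℝ²} e^{U(x)} e^{U(y)} |x−y|^{−α} dy dx = 2(4−α)π, where U(x) := ((4−α)/2)·log(C_α/(1+|x|²)) and C_α := ((2−α)(4−α)/π)^{1/(4−α)}. -/

import Mathlib

open MeasureTheory Real

noncomputable def Ca (α : ℝ) : ℝ := ((2 - α) * (4 - α) / Real.pi) ^ ((1 : ℝ) / (4 - α))

noncomputable def U (α : ℝ) (x : EuclideanSpace ℝ (Fin 2)) : ℝ :=
  ((4 - α) / 2) * Real.log (Ca α / (1 + ‖x‖ ^ 2))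

section Aux
open Set

lemma det_mul_complex (c : ℂ) :
    (((1 : ℂ →L[ℂ] ℂ).smulRight c).restrictScalars ℝ).det = Complex.normSq c := by
  have h : ((((1 : ℂ →L[ℂ] ℂ).smulRight c).restrictScalars ℝ) : ℂ →ₗ[ℝ] ℂ)
      = Algebra.lmul ℝ ℂ c := by
    ext z
    simp [mul_comm]
  rw [ContinuousLinearMap.det, h]
  rw [← Algebra.norm_apply, Algebra.norm_complex_apply]

lemma integral_plane (g : ℝ → ℝ) :
    ∫ z : ℂ, g ‖z‖ = (2 * π) * ∫ r in Ioi (0:ℝ), r * g r := by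
  rw [← Complex.integral_comp_polarCoord_symm (fun z => g ‖z‖)]
  rw [show polarCoord.target = Ioi (0:ℝ) ×ˢ Ioo (-π) π from rfl]
  have : ∀ p ∈ Ioi (0:ℝ) ×ˢ Ioo (-π) π,
      p.1 • g ‖Complex.polarCoord.symm p‖ = (p.1 * g p.1) * (fun _ : ℝ => (1:ℝ)) p.2 := by
    rintro ⟨r, θ⟩ ⟨hr, hθ⟩
    simp only [Complex.norm_polarCoord_symm, smul_eq_mul, mul_one]
    rw [abs_of_pos hr]
  rw [setIntegral_congr_fun (by measurability) this, Measure.volume_eq_prod,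
    setIntegral_prod_mul (fun r => r * g r) (fun _ => (1:ℝ)), setIntegral_const, smul_eq_mul,
    mul_one, Real.volume_real_Ioo_of_le (by linarith [Real.pi_pos])]
  ring

lemma base_deriv (r : ℝ) : HasDerivAt (fun s : ℝ => s^2/(1+s^2)) (2*r/(1+r^2)^2) r := by
  have h1 : HasDerivAt (fun s : ℝ => s^2) (2*r) r := by
    simpa using hasDerivAt_pow 2 r
  have h2 : HasDerivAt (fun s : ℝ => 1+s^2) (2*r) r := by
    simpa using h1.const_add 1
  have hne : (1 + r^2) ≠ 0 := by positivity
  have := h1.div h2 hne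
  refine this.congr_deriv ?_
  show (2*r*(1+r^2) - r^2*(2*r))/(1+r^2)^2 = 2*r/(1+r^2)^2
  ring

lemma base_tendsto : Filter.Tendsto (fun s : ℝ => s^2/(1+s^2)) Filter.atTop (nhds 1) := by
  have heq : (fun s : ℝ => s^2/(1+s^2)) = fun s : ℝ => 1 - 1/(1+s^2) := by
    funext s
    have : (1 + s^2) ≠ 0 := by positivity
    field_simp
    ring
  rw [heq]
  have h2 : Filter.Tendsto (fun s : ℝ => 1+s^2) Filter.atTop Filter.atTop :=
    Filter.tendsto_atTop_add_const_left _ 1 (Filter.tendsto_pow_atTop two_ne_zero)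
  have := h2.inv_tendsto_atTop
  have h3 : Filter.Tendsto (fun s : ℝ => 1 - 1/(1+s^2)) Filter.atTop (nhds (1 - 0)) := by
    simpa [one_div] using (tendsto_const_nhds (x := (1:ℝ))).sub this
  simpa using h3

lemma radial₂ : ∫ r in Ioi (0:ℝ), r * (1+r^2) ^ (-(2:ℝ)) = 1/2 := by
  have key : ∫ r in Ioi (0:ℝ), 2*r/(1+r^2)^2 = 1 - 0^2/(1+0^2) := by
    apply integral_Ioi_of_hasDerivAt_of_nonneg (g := fun s : ℝ => s^2/(1+s^2)) (g' := fun r : ℝ => 2*r/(1+r^2)^2)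
    · exact (base_deriv 0).continuousAt.continuousWithinAt
    · exact fun x _ => base_deriv x
    · intro x hx
      have : (0:ℝ) < x := hx
      positivity
    · exact base_tendsto
  have : ∫ r in Ioi (0:ℝ), 2*r/(1+r^2)^2 = 2 * ∫ r in Ioi (0:ℝ), r * (1+r^2) ^ (-(2:ℝ)) := by
    rw [← integral_const_mul]
    apply setIntegral_congr_fun measurableSet_Ioi
    intro x _
    have hP : (0:ℝ) < 1 + x^2 := by positivity
    simp only []
    rw [Real.rpow_neg hP.le, Real.rpow_two]
    field_simp
  rw [this] at key
  simp only [ne_eq, OfNat.ofNat_ne_zero, not_false_eq_true, zero_pow, zero_div, sub_zero] at key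
  linarith

lemma radial₁ (α : ℝ) (h0 : 0 < α) (h2 : α < 2) :
    ∫ r in Ioi (0:ℝ), r * ((1+r^2) ^ (-((4-α)/2)) * r ^ (-α)) = 1/(2-α) := by
  set c := (2-α)/2 with hc
  have h2' : (0:ℝ) < 2 - α := by linarith
  have hcpos : 0 < c := by rw [hc]; positivity
  have hderiv : ∀ x ∈ Ioi (0:ℝ), HasDerivAt (fun s : ℝ => (s^2/(1+s^2)) ^ c)
      ((2-α) * (x * ((1+x^2) ^ (-((4-α)/2)) * x ^ (-α)))) x := by
    intro x hx
    have hx : (0:ℝ) < x := hx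
    have hP : (0:ℝ) < 1 + x^2 := by positivity
    have hx0 : x^2/(1+x^2) ≠ 0 := by positivity
    have hd := (base_deriv x).rpow_const (p := c) (Or.inl hx0)
    convert hd using 1
    have e1 : ((x:ℝ)^2/(1+x^2)) ^ (c-1) = x ^ (-α) * ((1+x^2) ^ (c-1))⁻¹ := by
      rw [Real.div_rpow (sq_nonneg x) hP.le, ← Real.rpow_natCast x 2,
        ← Real.rpow_mul hx.le]
      rw [show ((2:ℕ):ℝ) * (c-1) = -α by rw [hc]; push_cast; ring]
      rw [div_eq_mul_inv]
    have e2 : ((1:ℝ)+x^2) ^ (-((4-α)/2)) = ((1+x^2) ^ (c-1))⁻¹ * ((1+x^2)^2)⁻¹ := by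
      rw [show -((4-α)/2) = -(c-1) + -(2:ℝ) by rw [hc]; ring, Real.rpow_add hP,
        Real.rpow_neg hP.le, Real.rpow_neg hP.le, Real.rpow_two]
    rw [e1, e2]
    have hPc : ((1:ℝ)+x^2) ^ (c-1) ≠ 0 := by positivity
    field_simp
    rw [hc]
    ring
  have key : ∫ x in Ioi (0:ℝ), (2-α) * (x * ((1+x^2) ^ (-((4-α)/2)) * x ^ (-α)))
      = 1 - (0^2/(1+0^2):ℝ) ^ c := by
    apply integral_Ioi_of_hasDerivAt_of_nonneg (g := fun s : ℝ => (s^2/(1+s^2)) ^ c)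
    · exact (((base_deriv 0).continuousAt).rpow_const (Or.inr hcpos.le)).continuousWithinAt
    · exact hderiv
    · intro x hx
      have hx : (0:ℝ) < x := hx
      have : (0:ℝ) ≤ x * ((1+x^2) ^ (-((4-α)/2)) * x ^ (-α)) := by positivity
      exact mul_nonneg h2'.le this
    · have := base_tendsto.rpow_const (p := c) (Or.inr hcpos.le)
      simpa [Real.one_rpow] using this
  rw [integral_const_mul] at key
  have : ((0:ℝ)^2/(1+0^2)) ^ c = 0 := by
    norm_num
    exact Real.zero_rpow (ne_of_gt hcpos)
  rw [this, sub_zero] at key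
  field_simp at key ⊢
  linarith

lemma planeB (α : ℝ) (h0 : 0 < α) (h2 : α < 2) :
    ∫ z : ℂ, (1+‖z‖^2) ^ (-((4-α)/2)) * ‖z‖ ^ (-α) = 2*π/(2-α) := by
  have := integral_plane (fun r : ℝ => (1+r^2) ^ (-((4-α)/2)) * r ^ (-α))
  rw [this, radial₁ α h0 h2]
  ring

lemma planeC : ∫ z : ℂ, (1+‖z‖^2) ^ (-(2:ℝ)) = π := by
  have := integral_plane (fun r : ℝ => (1+r^2) ^ (-(2:ℝ)))
  rw [this, radial₂]
  ring

lemma rpow_combine (α A Z m r : ℝ) (hA : 0 < A) (hZ : 0 < Z) (hm : 0 < m) (hr : 0 ≤ r)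
    (h0 : 0 < α) :
    (A^2/m^4) * ((A*Z/m^2) ^ (-((4-α)/2)) * (r*A/m) ^ (-α))
      = A ^ (-(α/2)) * (Z ^ (-((4-α)/2)) * r ^ (-α)) := by
  rcases eq_or_lt_of_le hr with h|hrpos
  · subst h
    simp [Real.zero_rpow (neg_ne_zero.2 (ne_of_gt h0))]
  · have hL : (0:ℝ) < (A^2/m^4) * ((A*Z/m^2) ^ (-((4-α)/2)) * (r*A/m) ^ (-α)) := by positivity
    have hR : (0:ℝ) < A ^ (-(α/2)) * (Z ^ (-((4-α)/2)) * r ^ (-α)) := by positivity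
    apply Real.log_injOn_pos (Set.mem_Ioi.2 hL) (Set.mem_Ioi.2 hR)
    have l1 : Real.log (A*Z/m^2) = Real.log A + Real.log Z - 2 * Real.log m := by
      rw [Real.log_div (by positivity) (by positivity),
        Real.log_mul (ne_of_gt hA) (ne_of_gt hZ), Real.log_pow]
      push_cast; ring
    have l2 : Real.log (r*A/m) = Real.log r + Real.log A - Real.log m := by
      rw [Real.log_div (by positivity) (ne_of_gt hm),
        Real.log_mul (ne_of_gt hrpos) (ne_of_gt hA)]
    rw [Real.log_mul (by positivity) (by positivity),
      Real.log_mul (by positivity) (by positivity),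
      Real.log_mul (by positivity) (by positivity),
      Real.log_mul (by positivity) (by positivity),
      Real.log_div (by positivity) (by positivity),
      Real.log_pow, Real.log_pow,
      Real.log_rpow (by positivity), Real.log_rpow (by positivity),
      Real.log_rpow hA, Real.log_rpow hZ, Real.log_rpow hrpos, l1, l2]
    push_cast; ring

lemma lemA (α : ℝ) (h0 : 0 < α) (h2 : α < 2) (a : ℂ) :
    ∫ z : ℂ, (1+‖z‖^2) ^ (-((4-α)/2)) * ‖a - z‖ ^ (-α)
      = 2*π/(2-α) * (1+‖a‖^2) ^ (-(α/2)) := by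
  have hsq : ∀ w : ℂ, ‖w‖^2 = Complex.normSq w := fun w => by
    rw [Complex.sq_norm]
  rcases eq_or_ne a 0 with rfl|ha
  · simp only [zero_sub, norm_neg, norm_zero]
    rw [planeB α h0 h2]
    norm_num
  set ca := (starRingEnd ℂ) a with hcadef
  have hca : ca ≠ 0 := by simpa [hcadef] using ha
  set s : Set ℂ := {z | ¬ (1 - ca * z = 0)} with hsdef
  set φ : ℂ → ℂ := fun z => (z + a)/(1 - ca*z) with hφdef
  set D : ℂ → ℂ := fun z => (1 + ca*a)/(1 - ca*z)^2 with hDdef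
  set f' : ℂ → (ℂ →L[ℝ] ℂ) := fun z => ((1 : ℂ →L[ℂ] ℂ).smulRight (D z)).restrictScalars ℝ
    with hf'def
  set G : ℂ → ℝ := fun w => (1+‖w‖^2) ^ (-((4-α)/2)) * ‖a - w‖ ^ (-α) with hGdef
  have hApos : (0:ℝ) < 1 + ‖a‖^2 := by positivity
  have hone : (1:ℂ) + ca*a = ((1 + ‖a‖^2 : ℝ) : ℂ) := by
    have h1 : ca * a = ((‖a‖^2 : ℝ) : ℂ) := by
      rw [hcadef, mul_comm, Complex.mul_conj, hsq a]
    rw [h1]; push_cast; ring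
  have honene : (1:ℂ) + ca*a ≠ 0 := by
    rw [hone]
    exact_mod_cast ne_of_gt hApos
  have hs : MeasurableSet s :=
    (measurableSet_eq_fun (by fun_prop) measurable_const).compl
  have hinj : Set.InjOn φ s := by
    intro z hz w hw h
    have hz' : (1:ℂ) - ca*z ≠ 0 := hz
    have hw' : (1:ℂ) - ca*w ≠ 0 := hw
    rw [hφdef] at h
    simp only [] at h
    rw [div_eq_div_iff hz' hw'] at h
    have hzero : (1 + ca*a) * (z - w) = 0 := by linear_combination h
    rcases mul_eq_zero.mp hzero with h'|h'
    · exact absurd h' honene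
    · exact sub_eq_zero.mp h'
  have hder : ∀ z ∈ s, HasFDerivWithinAt φ (f' z) s z := by
    intro z hz
    have hz' : (1:ℂ) - ca*z ≠ 0 := hz
    have h1 : HasDerivAt (fun z : ℂ => z + a) 1 z := by
      simpa using (hasDerivAt_id z).add_const a
    have h2 : HasDerivAt (fun z : ℂ => 1 - ca*z) (-ca) z := by
      simpa using ((hasDerivAt_id z).const_mul ca).const_sub 1
    have hd := h1.div h2 hz'
    have heq : (1*(1 - ca*z) - (z + a)*(-ca))/(1 - ca*z)^2 = D z := by
      rw [hDdef]
      congr 1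
      ring
    rw [heq] at hd
    exact (hd.hasFDerivAt.restrictScalars ℝ).hasFDerivWithinAt
  have himg : {w : ℂ | ¬ (1 + ca*w = 0)} ⊆ φ '' s := by
    intro w hw
    have hw' : (1:ℂ) + ca*w ≠ 0 := hw
    have hkey : (1:ℂ) - ca*((w-a)/(1+ca*w)) = (1+ca*a)/(1+ca*w) := by
      field_simp
      ring
    refine ⟨(w - a)/(1 + ca*w), ?_, ?_⟩
    · show ¬ ((1:ℂ) - ca * ((w-a)/(1+ca*w)) = 0)
      rw [hkey]
      exact div_ne_zero honene hw'
    · show ((w-a)/(1+ca*w) + a)/(1 - ca*((w-a)/(1+ca*w))) = w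
      rw [hkey]
      rw [div_eq_iff (div_ne_zero honene hw')]
      rw [div_add' _ _ _ hw', mul_div_assoc']; congr 1; ring
  have hnull1 : volume ((φ '' s)ᶜ) = 0 := by
    have hsub : (φ '' s)ᶜ ⊆ {-(ca⁻¹)} := by
      intro w hw
      by_contra hne
      apply hw
      apply himg
      show ¬ ((1:ℂ) + ca*w = 0)
      intro h
      apply hne
      have h' : ca * w = -1 := by linear_combination h
      show w = -(ca⁻¹)
      field_simp
      linear_combination h'
    exact measure_mono_null hsub (measure_singleton _)
  have hnull2 : volume (sᶜ) = 0 := by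
    have hsub : sᶜ ⊆ {ca⁻¹} := by
      intro z hz
      have h : (1:ℂ) - ca*z = 0 := not_not.mp hz
      show z = ca⁻¹
      field_simp
      linear_combination -h
    exact measure_mono_null hsub (measure_singleton _)
  have hpoint : ∀ z ∈ s, |(f' z).det| • G (φ z)
      = (1+‖a‖^2) ^ (-(α/2)) * ((1+‖z‖^2) ^ (-((4-α)/2)) * ‖z‖ ^ (-α)) := by
    intro z hz
    have hz' : (1:ℂ) - ca*z ≠ 0 := hz
    have hm : (0:ℝ) < ‖(1:ℂ) - ca*z‖ := norm_pos_iff.mpr hz'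
    set m : ℝ := ‖(1:ℂ) - ca*z‖ with hmdef
    have hZpos : (0:ℝ) < 1 + ‖z‖^2 := by positivity
    -- determinant
    have hdet : |(f' z).det| = (1+‖a‖^2)^2/m^4 := by
      rw [hf'def]
      simp only []
      rw [det_mul_complex, abs_of_nonneg (Complex.normSq_nonneg _)]
      rw [hDdef]
      simp only []
      rw [Complex.normSq_div, hone, map_pow]
      rw [show Complex.normSq ((1 + ‖a‖^2 : ℝ) : ℂ) = (1+‖a‖^2)^2 by
        rw [Complex.normSq_ofReal]; ring]
      rw [← hsq, ← hmdef]
      ring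
    -- distance
    have hdist : ‖a - φ z‖ = ‖z‖ * (1+‖a‖^2) / m := by
      have : a - φ z = -((1 + ca*a) * z)/(1 - ca*z) := by
        rw [hφdef]
        show a - (z + a)/(1 - ca*z) = _; rw [sub_div' hz']; congr 1; ring
      rw [this, norm_div, norm_neg, norm_mul, hone, Complex.norm_real,
        Real.norm_eq_abs, abs_of_pos hApos, ← hmdef]
      ring
    -- norm of image
    have hnormsq : ‖z + a‖^2 + m^2 = (1+‖a‖^2) * (1+‖z‖^2) := by
      rw [hmdef, hsq, hsq, hsq, hsq]
      simp only [hcadef, Complex.normSq_apply, Complex.mul_re, Complex.mul_im,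
        Complex.sub_re, Complex.sub_im, Complex.add_re, Complex.add_im,
        Complex.conj_re, Complex.conj_im, Complex.one_re, Complex.one_im]
      ring
    have himg2 : 1 + ‖φ z‖^2 = (1+‖a‖^2) * (1+‖z‖^2) / m^2 := by
      rw [hφdef]
      simp only []
      rw [norm_div, div_pow, ← hmdef]
      rw [← hnormsq]
      field_simp
      ring
    rw [hGdef]
    simp only []
    rw [himg2, hdist, hdet, smul_eq_mul]
    exact rpow_combine α (1+‖a‖^2) (1+‖z‖^2) m ‖z‖ hApos hZpos hm (norm_nonneg z) h0
  -- chain of equalities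
  have e1 : ∫ w : ℂ, G w = ∫ w in φ '' s, G w := by
    rw [setIntegral_congr_set (ae_eq_univ.2 hnull1), setIntegral_univ]
  have e2 : ∫ w in φ '' s, G w = ∫ z in s, |(f' z).det| • G (φ z) :=
    integral_image_eq_integral_abs_det_fderiv_smul volume hs hder hinj G
  have e3 : ∫ z in s, |(f' z).det| • G (φ z)
      = ∫ z in s, (1+‖a‖^2) ^ (-(α/2)) * ((1+‖z‖^2) ^ (-((4-α)/2)) * ‖z‖ ^ (-α)) :=
    setIntegral_congr_fun hs hpoint
  have e4 : (∫ z in s, (1+‖a‖^2) ^ (-(α/2)) * ((1+‖z‖^2) ^ (-((4-α)/2)) * ‖z‖ ^ (-α)))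
      = ∫ z : ℂ, (1+‖a‖^2) ^ (-(α/2)) * ((1+‖z‖^2) ^ (-((4-α)/2)) * ‖z‖ ^ (-α)) := by
    rw [setIntegral_congr_set (ae_eq_univ.2 hnull2), setIntegral_univ]
  show ∫ w : ℂ, G w = _
  rw [e1, e2, e3, e4, integral_const_mul, planeB α h0 h2]
  ring

end Aux

theorem double_integral_identity (α : ℝ) (hα : 0 < α) (hα' : α < 2) :
    (∫ x : EuclideanSpace ℝ (Fin 2), ∫ y : EuclideanSpace ℝ (Fin 2),
        Real.exp (U α x) * Real.exp (U α y) / ‖x - y‖ ^ α)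
      = 2 * (4 - α) * Real.pi := by
  have hpi := Real.pi_pos
  have h2 : (0:ℝ) < 2 - α := by linarith
  have h4 : (0:ℝ) < 4 - α := by linarith
  have hbase : (0:ℝ) < (2-α)*(4-α)/π := div_pos (mul_pos h2 h4) hpi
  have hCa : 0 < Ca α := Real.rpow_pos_of_pos hbase _
  set K := Ca α ^ ((4-α)/2) with hK
  have hexpU : ∀ x : EuclideanSpace ℝ (Fin 2),
      Real.exp (U α x) = K * ((1+‖x‖^2) ^ ((4-α)/2))⁻¹ := by
    intro x
    have hq : (0:ℝ) < Ca α / (1+‖x‖^2) := by positivity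
    rw [U, mul_comm, ← Real.rpow_def_of_pos hq,
      Real.div_rpow hCa.le (by positivity), div_eq_mul_inv]
  set e : ℂ ≃ₗᵢ[ℝ] EuclideanSpace ℝ (Fin 2) := Complex.orthonormalBasisOneI.repr with he
  have hmp : MeasurePreserving e volume volume :=
    Complex.orthonormalBasisOneI.measurePreserving_repr
  have hemb : MeasurableEmbedding e := e.toHomeomorph.measurableEmbedding
  have step1 : (∫ x : EuclideanSpace ℝ (Fin 2), ∫ y : EuclideanSpace ℝ (Fin 2),
        Real.exp (U α x) * Real.exp (U α y) / ‖x - y‖ ^ α)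
      = ∫ z : ℂ, ∫ w : ℂ,
          (K * (1+‖z‖^2) ^ (-((4-α)/2))) * ((1+‖w‖^2) ^ (-((4-α)/2)) * ‖z-w‖ ^ (-α)) * K := by
    rw [← hmp.integral_comp hemb]
    refine integral_congr_ae (Filter.Eventually.of_forall fun z => ?_)
    dsimp only
    rw [← hmp.integral_comp hemb]
    refine integral_congr_ae (Filter.Eventually.of_forall fun w => ?_)
    dsimp only
    have hn : ‖e z - e w‖ = ‖z - w‖ := by
      rw [← map_sub e z w, LinearIsometryEquiv.norm_map]
    rw [hexpU, hexpU, hn, LinearIsometryEquiv.norm_map, LinearIsometryEquiv.norm_map]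
    rw [div_eq_mul_inv, ← Real.rpow_neg (norm_nonneg _),
      ← Real.rpow_neg (by positivity : (0:ℝ) ≤ 1+‖z‖^2),
      ← Real.rpow_neg (by positivity : (0:ℝ) ≤ 1+‖w‖^2)]
    ring
  have step2 : ∀ z : ℂ, (∫ w : ℂ,
        (K * (1+‖z‖^2) ^ (-((4-α)/2))) * ((1+‖w‖^2) ^ (-((4-α)/2)) * ‖z-w‖ ^ (-α)) * K)
      = (K^2 * (2*π/(2-α))) * (1+‖z‖^2) ^ (-(2:ℝ)) := by
    intro z
    have hZ : (0:ℝ) < 1+‖z‖^2 := by positivity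
    rw [show (fun w : ℂ =>
        (K * (1+‖z‖^2) ^ (-((4-α)/2))) * ((1+‖w‖^2) ^ (-((4-α)/2)) * ‖z-w‖ ^ (-α)) * K)
      = (fun w : ℂ =>
        (K * (1+‖z‖^2) ^ (-((4-α)/2)) * K) * ((1+‖w‖^2) ^ (-((4-α)/2)) * ‖z-w‖ ^ (-α)))
      from funext fun w => by ring]
    rw [integral_const_mul, lemA α hα hα' z]
    rw [show (-(2:ℝ)) = -((4-α)/2) + -(α/2) by ring, Real.rpow_add hZ]
    ring
  rw [step1, integral_congr_ae (Filter.Eventually.of_forall step2), integral_const_mul, planeC]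
  have hK2 : K^2 = (2-α)*(4-α)/π := by
    rw [hK, ← Real.rpow_natCast (Ca α ^ ((4-α)/2)) 2, ← Real.rpow_mul hCa.le,
      show (4-α)/2*((2:ℕ):ℝ) = 4-α by push_cast; ring, Ca,
      ← Real.rpow_mul hbase.le, show (1:ℝ)/(4-α)*(4-α) = 1 by field_simp, Real.rpow_one]
  rw [hK2]
  field_simp
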